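/- Let T(λ) = Σ_{k=0}^M λ^k A_k be a polynomial operator pencil in a Hilbert space with A_k bounded for k ≥ 1 and A₀ closed. Suppose λ ∈ σ_p(T) with eigenvector x, T(λ)x = 0. Then for 0 < δ small enough that B_{2δ}(λ)\{λ} ⊆ ρ(T), the contour integral Q := (1/2πi)∮_{|z|=δ} T(λ+z)^{−1} Σ_{k=0}^{M−1} (z^k/(k+1)!) T^{(k+1)}(λ) dz satisfies Qx = x. -/

import Mathlib

open Filter Topology

noncomputable section

lemma aux_sum14 (l z : ℂ) (j : ℕ) :
    ∑ k ∈ Finset.range (j + 1), z ^ (k + 1) / ((Nat.factorial (k + 1) : ℂ)) *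
      (((Nat.factorial (j + 1) / Nat.factorial (j - k) : ℕ) : ℂ) * l ^ (j - k))
      = (l + z) ^ (j + 1) - l ^ (j + 1) := by
  have h := add_pow z l (j + 1)
  rw [Finset.sum_range_succ'] at h
  simp only [pow_zero, one_mul, Nat.sub_zero, Nat.choose_zero_right, Nat.cast_one, mul_one] at h
  have hz : (z + l) = (l + z) := by ring
  rw [hz] at h
  have : ∑ k ∈ Finset.range (j + 1), z ^ (k + 1) / ((Nat.factorial (k + 1) : ℂ)) *
      (((Nat.factorial (j + 1) / Nat.factorial (j - k) : ℕ) : ℂ) * l ^ (j - k))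
      = ∑ k ∈ Finset.range (j + 1), z ^ (k + 1) * l ^ (j + 1 - (k + 1)) *
        ((j + 1).choose (k + 1) : ℂ) := by
    refine Finset.sum_congr rfl fun k hk => ?_
    have hkj : k ≤ j := by simpa [Nat.lt_succ_iff] using hk
    have hfac : Nat.factorial (j + 1) / Nat.factorial (j - k)
        = (j + 1).choose (k + 1) * Nat.factorial (k + 1) := by
      refine Nat.div_eq_of_eq_mul_left (Nat.factorial_pos _) ?_
      have h1 : k + 1 ≤ j + 1 := by omega
      have h2 := Nat.choose_mul_factorial_mul_factorial h1
      have h3 : j + 1 - (k + 1) = j - k := by omega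
      rw [h3] at h2
      rw [← h2]
    have h4 : j + 1 - (k + 1) = j - k := by omega
    rw [hfac, h4]
    have hne : ((Nat.factorial (k + 1) : ℂ)) ≠ 0 := by
      exact Nat.cast_ne_zero.mpr (Nat.factorial_ne_zero _)
    push_cast
    field_simp
  rw [this, h]; ring

theorem stmt_14 {H : Type*} [NormedAddCommGroup H] [InnerProductSpace ℂ H] [CompleteSpace H]
    (M : ℕ) (A0 : H →ₗ.[ℂ] H)
    (hA0closed : IsClosed (A0.graph : Set (H × H)))
    (hA0dense : Dense (A0.domain : Set H))
    (A : Fin M → (H →L[ℂ] H))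
    (l : ℂ) (x : A0.domain) (hx0 : (x : H) ≠ 0)
    (hx : A0 x + ∑ j : Fin M, l ^ ((j : ℕ) + 1) • A j (x : H) = 0)
    (δ : ℝ) (hδ : 0 < δ)
    (R : ℂ → (H →L[ℂ] H))
    (hres : ∀ z : ℂ, z ≠ 0 → ‖z‖ < 2 * δ →
      (∀ y : H, ∃ h : R z y ∈ A0.domain,
        A0 ⟨R z y, h⟩ + ∑ j : Fin M, (l + z) ^ ((j : ℕ) + 1) • A j (R z y) = y) ∧
      (∀ u : A0.domain,
        R z (A0 u + ∑ j : Fin M, (l + z) ^ ((j : ℕ) + 1) • A j (u : H)) = (u : H)))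
    (Dk : ℕ → (H →L[ℂ] H))
    (hDk : ∀ k : ℕ, Dk k = ∑ j : Fin M,
      if k ≤ (j : ℕ) then
        (((Nat.factorial ((j : ℕ) + 1) / Nat.factorial ((j : ℕ) - k) : ℕ) : ℂ)
          * l ^ ((j : ℕ) - k)) • A j
      else 0)
    (Q : H →L[ℂ] H)
    (hQ : Q = (2 * Real.pi * Complex.I : ℂ)⁻¹ •
      (∮ z in C(0, δ), (R z).comp
        (∑ k ∈ Finset.range M, (z ^ k / ((Nat.factorial (k + 1) : ℂ))) • Dk k))) :
    Q (x : H) = (x : H) := by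
  classical
  -- Step B: the derivative expansion identity applied to x
  have hSx : ∀ z : ℂ,
      z • (∑ k ∈ Finset.range M, (z ^ k / ((Nat.factorial (k + 1) : ℂ))) • Dk k) (x : H)
      = A0 x + ∑ j : Fin M, (l + z) ^ ((j : ℕ) + 1) • A j (x : H) := by
    intro z
    have e1 : z • (∑ k ∈ Finset.range M, (z ^ k / ((Nat.factorial (k + 1) : ℂ))) • Dk k) (x : H)
        = ∑ j : Fin M, (∑ k ∈ Finset.range M,
            if k ≤ (j : ℕ) then
              z ^ (k + 1) / ((Nat.factorial (k + 1) : ℂ)) *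
                (((Nat.factorial ((j : ℕ) + 1) / Nat.factorial ((j : ℕ) - k) : ℕ) : ℂ)
                  * l ^ ((j : ℕ) - k))
            else 0) • A j (x : H) := by
      simp only [ContinuousLinearMap.sum_apply, ContinuousLinearMap.smul_apply, hDk,
        apply_ite (fun f : H →L[ℂ] H => f (x : H)), ContinuousLinearMap.zero_apply,
        Finset.smul_sum, smul_ite, smul_smul, smul_zero]
      rw [Finset.sum_comm]
      refine Finset.sum_congr rfl fun j _ => ?_
      rw [Finset.sum_smul]
      refine Finset.sum_congr rfl fun k _ => ?_
      rw [ite_smul, zero_smul]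
      by_cases hk : k ≤ (j : ℕ)
      · simp only [if_pos hk]
        congr 1
        ring
      · simp only [if_neg hk]
    rw [e1]
    have e2 : ∀ j : Fin M, (∑ k ∈ Finset.range M,
        if k ≤ (j : ℕ) then
          z ^ (k + 1) / ((Nat.factorial (k + 1) : ℂ)) *
            (((Nat.factorial ((j : ℕ) + 1) / Nat.factorial ((j : ℕ) - k) : ℕ) : ℂ)
              * l ^ ((j : ℕ) - k))
        else 0) = (l + z) ^ ((j : ℕ) + 1) - l ^ ((j : ℕ) + 1) := by
      intro j
      rw [← Finset.sum_filter]
      have hfil : (Finset.range M).filter (fun k => k ≤ (j : ℕ)) = Finset.range ((j : ℕ) + 1) := by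
        ext k
        simp only [Finset.mem_filter, Finset.mem_range, Nat.lt_succ_iff]
        constructor
        · rintro ⟨_, hk⟩; exact hk
        · intro hk; exact ⟨lt_of_le_of_lt hk j.2, hk⟩
      rw [hfil, aux_sum14]
    calc ∑ j : Fin M, (∑ k ∈ Finset.range M,
            if k ≤ (j : ℕ) then
              z ^ (k + 1) / ((Nat.factorial (k + 1) : ℂ)) *
                (((Nat.factorial ((j : ℕ) + 1) / Nat.factorial ((j : ℕ) - k) : ℕ) : ℂ)
                  * l ^ ((j : ℕ) - k))
            else 0) • A j (x : H)
        = ∑ j : Fin M, ((l + z) ^ ((j : ℕ) + 1) - l ^ ((j : ℕ) + 1)) • A j (x : H) := by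
          refine Finset.sum_congr rfl fun j _ => ?_
          rw [e2 j]
      _ = ∑ j : Fin M, (l + z) ^ ((j : ℕ) + 1) • A j (x : H)
            - ∑ j : Fin M, l ^ ((j : ℕ) + 1) • A j (x : H) := by
          simp [sub_smul, Finset.sum_sub_distrib]
      _ = A0 x + ∑ j : Fin M, (l + z) ^ ((j : ℕ) + 1) • A j (x : H) := by
          have hx' : ∑ j : Fin M, l ^ ((j : ℕ) + 1) • A j (x : H) = -(A0 x) :=
            eq_neg_of_add_eq_zero_right hx
          rw [hx']; abel
  -- Step C: pointwise value of the integrand at x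
  have hFx : ∀ z : ℂ, z ≠ 0 → ‖z‖ < 2 * δ →
      ((R z).comp (∑ k ∈ Finset.range M, (z ^ k / ((Nat.factorial (k + 1) : ℂ))) • Dk k)) (x : H)
      = z⁻¹ • (x : H) := by
    intro z hz1 hz2
    have h2 := (hres z hz1 hz2).2 x
    have h3 : z • ((R z).comp
        (∑ k ∈ Finset.range M, (z ^ k / ((Nat.factorial (k + 1) : ℂ))) • Dk k)) (x : H)
        = (x : H) := by
      rw [ContinuousLinearMap.comp_apply, ← map_smul, hSx z, h2]
    calc ((R z).comp (∑ k ∈ Finset.range M, (z ^ k / ((Nat.factorial (k + 1) : ℂ))) • Dk k)) (x : H)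
        = z⁻¹ • z • ((R z).comp
            (∑ k ∈ Finset.range M, (z ^ k / ((Nat.factorial (k + 1) : ℂ))) • Dk k)) (x : H) := by
          rw [smul_smul, inv_mul_cancel₀ hz1, one_smul]
      _ = z⁻¹ • (x : H) := by rw [h3]
  -- Step D: continuity of the resolvent
  have hU : IsOpen {z : ℂ | z ≠ 0 ∧ ‖z‖ < 2 * δ} :=
    IsOpen.and isOpen_ne (isOpen_lt continuous_norm continuous_const)
  have hRcont : ∀ z₀ : ℂ, z₀ ≠ 0 → ‖z₀‖ < 2 * δ → ContinuousAt R z₀ := by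
    intro z₀ h01 h02
    set B2 : ℂ → (H →L[ℂ] H) := fun w =>
      ∑ j : Fin M, ((l + z₀) ^ ((j : ℕ) + 1) - (l + w) ^ ((j : ℕ) + 1)) • A j with hB2
    have hB2cont : Continuous B2 := by
      apply continuous_finset_sum
      intro j _
      exact (continuous_const.sub ((continuous_const.add continuous_id).pow _)).smul
        continuous_const
    have hB2z₀ : B2 z₀ = 0 := by simp [hB2]
    have hB2app : ∀ w (v : H), B2 w v
        = ∑ j : Fin M, (l + z₀) ^ ((j : ℕ) + 1) • A j v
          - ∑ j : Fin M, (l + w) ^ ((j : ℕ) + 1) • A j v := by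
      intro w v
      simp [hB2, ContinuousLinearMap.sum_apply, ContinuousLinearMap.smul_apply, sub_smul,
        Finset.sum_sub_distrib]
    have hres_id : ∀ w : ℂ, w ≠ 0 → ‖w‖ < 2 * δ → ∀ y : H,
        R w y = R z₀ y + R z₀ (B2 w (R w y)) := by
      intro w hw1 hw2 y
      obtain ⟨hmem, heq⟩ := (hres w hw1 hw2).1 y
      have h5 := (hres z₀ h01 h02).2 ⟨R w y, hmem⟩
      have h6 : A0 ⟨R w y, hmem⟩ + ∑ j : Fin M, (l + z₀) ^ ((j : ℕ) + 1) • A j (R w y)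
          = y + B2 w (R w y) := by
        calc A0 ⟨R w y, hmem⟩ + ∑ j : Fin M, (l + z₀) ^ ((j : ℕ) + 1) • A j (R w y)
            = (A0 ⟨R w y, hmem⟩ + ∑ j : Fin M, (l + w) ^ ((j : ℕ) + 1) • A j (R w y))
              + (∑ j : Fin M, (l + z₀) ^ ((j : ℕ) + 1) • A j (R w y)
                - ∑ j : Fin M, (l + w) ^ ((j : ℕ) + 1) • A j (R w y)) := by abel
          _ = y + B2 w (R w y) := by rw [heq, ← hB2app]
      rw [h6] at h5
      have h5' : R z₀ (y + B2 w (R w y)) = R w y := h5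
      conv_lhs => rw [← h5']
      rw [map_add]
    rw [ContinuousAt, tendsto_iff_norm_sub_tendsto_zero]
    have hBnorm : Tendsto (fun w => 2 * ‖R z₀‖ ^ 2 * ‖B2 w‖) (𝓝 z₀) (𝓝 0) := by
      have h7 : Tendsto (fun w => ‖B2 w‖) (𝓝 z₀) (𝓝 ‖B2 z₀‖) := (hB2cont.norm).tendsto z₀
      rw [hB2z₀, norm_zero] at h7
      simpa using h7.const_mul (2 * ‖R z₀‖ ^ 2)
    have hsmall : ∀ᶠ w in 𝓝 z₀, ‖R z₀‖ * ‖B2 w‖ ≤ 1 / 2 := by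
      have h7 : Tendsto (fun w => ‖R z₀‖ * ‖B2 w‖) (𝓝 z₀) (𝓝 0) := by
        have h8 : Tendsto (fun w => ‖B2 w‖) (𝓝 z₀) (𝓝 ‖B2 z₀‖) := (hB2cont.norm).tendsto z₀
        rw [hB2z₀, norm_zero] at h8
        simpa using h8.const_mul ‖R z₀‖
      exact (h7.eventually_lt_const (by norm_num : (0 : ℝ) < 1 / 2)).mono fun w hw => le_of_lt hw
    have hUev : ∀ᶠ w in 𝓝 z₀, w ≠ 0 ∧ ‖w‖ < 2 * δ :=
      hU.mem_nhds ⟨h01, h02⟩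
    have hev : ∀ᶠ w in 𝓝 z₀, ‖R w - R z₀‖ ≤ 2 * ‖R z₀‖ ^ 2 * ‖B2 w‖ := by
      filter_upwards [hUev, hsmall] with w hw hsw
      obtain ⟨hw1, hw2⟩ := hw
      have hRwb : ∀ y : H, ‖R w y‖ ≤ 2 * ‖R z₀‖ * ‖y‖ := by
        intro y
        have hb1 : ‖R z₀ (B2 w (R w y))‖ ≤ ‖R z₀‖ * ‖B2 w‖ * ‖R w y‖ := by
          calc ‖R z₀ (B2 w (R w y))‖ ≤ ‖R z₀‖ * ‖B2 w (R w y)‖ :=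
                ContinuousLinearMap.le_opNorm _ _
            _ ≤ ‖R z₀‖ * (‖B2 w‖ * ‖R w y‖) := by
                gcongr
                exact ContinuousLinearMap.le_opNorm _ _
            _ = ‖R z₀‖ * ‖B2 w‖ * ‖R w y‖ := by ring
        have h1 : ‖R w y‖ ≤ ‖R z₀ y‖ + ‖R z₀‖ * ‖B2 w‖ * ‖R w y‖ := by
          conv_lhs => rw [hres_id w hw1 hw2 y]
          exact (norm_add_le _ _).trans (add_le_add le_rfl hb1)
        have h2 : ‖R z₀ y‖ ≤ ‖R z₀‖ * ‖y‖ := ContinuousLinearMap.le_opNorm _ _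
        have h3 : ‖R z₀‖ * ‖B2 w‖ * ‖R w y‖ ≤ 1 / 2 * ‖R w y‖ :=
          mul_le_mul_of_nonneg_right hsw (norm_nonneg _)
        linarith
      refine ContinuousLinearMap.opNorm_le_bound _ (by positivity) fun y => ?_
      rw [ContinuousLinearMap.sub_apply]
      have h9 : R w y - R z₀ y = R z₀ (B2 w (R w y)) := by
        conv_lhs => rw [hres_id w hw1 hw2 y]
        abel
      rw [h9]
      calc ‖R z₀ (B2 w (R w y))‖ ≤ ‖R z₀‖ * (‖B2 w‖ * ‖R w y‖) := by
            refine (ContinuousLinearMap.le_opNorm _ _).trans ?_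
            gcongr
            exact ContinuousLinearMap.le_opNorm _ _
        _ ≤ ‖R z₀‖ * (‖B2 w‖ * (2 * ‖R z₀‖ * ‖y‖)) := by
            gcongr
            exact hRwb y
        _ = 2 * ‖R z₀‖ ^ 2 * ‖B2 w‖ * ‖y‖ := by ring
    exact squeeze_zero' (Filter.Eventually.of_forall fun w => norm_nonneg _) hev hBnorm
  -- Step E: compute the integral
  have hne : ∀ θ : ℝ, circleMap 0 δ θ ≠ 0 := fun θ =>
    circleMap_ne_center (ne_of_gt hδ)
  have hlt : ∀ θ : ℝ, ‖circleMap 0 δ θ‖ < 2 * δ := fun θ => by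
    rw [norm_circleMap_zero, abs_of_pos hδ]; linarith
  have hScont : Continuous (fun z : ℂ =>
      ∑ k ∈ Finset.range M, (z ^ k / ((Nat.factorial (k + 1) : ℂ))) • Dk k) := by
    apply continuous_finset_sum
    intro k _
    exact ((continuous_pow k).div_const _).smul continuous_const
  have hc : Continuous (circleMap 0 δ) := continuous_circleMap 0 δ
  have hRc : Continuous fun θ : ℝ => R (circleMap 0 δ θ) := by
    rw [continuous_iff_continuousAt]
    intro θ
    exact (hRcont _ (hne θ) (hlt θ)).comp hc.continuousAt
  have hFcont : Continuous (fun θ : ℝ => (circleMap 0 δ θ * Complex.I) •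
      ((R (circleMap 0 δ θ)).comp
        (∑ k ∈ Finset.range M,
          ((circleMap 0 δ θ) ^ k / ((Nat.factorial (k + 1) : ℂ))) • Dk k))) :=
    (hc.mul continuous_const).smul (hRc.clm_comp (hScont.comp hc))
  have hInt : IntervalIntegrable (fun θ : ℝ => (circleMap 0 δ θ * Complex.I) •
      ((R (circleMap 0 δ θ)).comp
        (∑ k ∈ Finset.range M,
          ((circleMap 0 δ θ) ^ k / ((Nat.factorial (k + 1) : ℂ))) • Dk k)))
      MeasureTheory.volume 0 (2 * Real.pi) :=
    hFcont.intervalIntegrable _ _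
  have hcirc : (∮ z in C(0, δ), (R z).comp
        (∑ k ∈ Finset.range M, (z ^ k / ((Nat.factorial (k + 1) : ℂ))) • Dk k))
      = ∫ θ in (0 : ℝ)..(2 * Real.pi), (circleMap 0 δ θ * Complex.I) •
        ((R (circleMap 0 δ θ)).comp
          (∑ k ∈ Finset.range M,
            ((circleMap 0 δ θ) ^ k / ((Nat.factorial (k + 1) : ℂ))) • Dk k)) := by
    simp only [circleIntegral, deriv_circleMap]
  rw [hQ, ContinuousLinearMap.smul_apply, hcirc,
    ContinuousLinearMap.intervalIntegral_apply hInt]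
  have heval : ∀ θ : ℝ, ((circleMap 0 δ θ * Complex.I) •
      ((R (circleMap 0 δ θ)).comp
        (∑ k ∈ Finset.range M,
          ((circleMap 0 δ θ) ^ k / ((Nat.factorial (k + 1) : ℂ))) • Dk k))) (x : H)
      = Complex.I • (x : H) := by
    intro θ
    rw [ContinuousLinearMap.smul_apply, hFx _ (hne θ) (hlt θ), smul_smul]
    congr 1
    field_simp [hne θ]
  rw [intervalIntegral.integral_congr (fun θ _ => heval θ), intervalIntegral.integral_const,
    sub_zero]
  have hsm : ((2 * Real.pi : ℝ)) • (Complex.I • (x : H))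
      = (((2 * Real.pi : ℝ) : ℂ)) • (Complex.I • (x : H)) := by
    rw [← Complex.coe_algebraMap, algebraMap_smul]
  rw [hsm, smul_smul, smul_smul]
  have hs1 : ((2 * (Real.pi : ℂ) * Complex.I)⁻¹ * (((2 * Real.pi : ℝ) : ℂ)) * Complex.I) = 1 := by
    have hπ : (Real.pi : ℂ) ≠ 0 := Complex.ofReal_ne_zero.mpr Real.pi_ne_zero
    push_cast
    field_simp
  rw [hs1, one_smul]

end
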